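/- Let x ∈ 𝔷₄ satisfy x₁₃ ≠ x₃₁. Then there exist unipotent elements g₁, g₂ ∈ S₄,₂ (i.e., gᵢ − I₆ is nilpotent) such that g₁·x·g₂^τ = x and χ_{S₄,₂}(g₁)·χ_{S₄,₂}(g₂) ≠ 1. -/
import Mathlib


open Matrix

/-- Assembles a `3 × 3` grid of `2 × 2` blocks into a `6 × 6` matrix. -/
def asm {𝕂 : Type*} [RCLike 𝕂] (m : Matrix (Fin 3) (Fin 3) (Matrix (Fin 2) (Fin 2) 𝕂)) :
    Matrix (Fin 6) (Fin 6) 𝕂 :=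
  Matrix.of fun i j =>
    m ⟨(i : ℕ) / 2, by have := i.2; omega⟩ ⟨(j : ℕ) / 2, by have := j.2; omega⟩
      ⟨(i : ℕ) % 2, by omega⟩ ⟨(j : ℕ) % 2, by omega⟩

/-- The subgroup `S₄,₂ ⊆ GL₆(𝕂)` of matrices of the block form `[[a,b,0],[0,a,0],[0,0,a]]`
with `a ∈ GL₂(𝕂)` and `b ∈ gl₂(𝕂)`. -/
def S42 (𝕂 : Type*) [RCLike 𝕂] : Set (Matrix (Fin 6) (Fin 6) 𝕂) :=
  {s | ∃ a b : Matrix (Fin 2) (Fin 2) 𝕂, IsUnit a.det ∧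
    s = asm !![a, b, 0; 0, a, 0; 0, 0, a]}

/-- The set `𝔷₄` of invertible `6 × 6` matrices whose only possibly nonzero entries are
those in the upper left `3 × 3` corner except the `(3,3)` one, together with the
entries at (1-indexed) positions `(4,4)`, `(5,6)`, `(6,5)`, which are equal to `1`. -/
def z4set (𝕂 : Type*) [RCLike 𝕂] : Set (Matrix (Fin 6) (Fin 6) 𝕂) :=
  {x | IsUnit x.det ∧ x 2 2 = 0 ∧ x 3 3 = 1 ∧ x 4 5 = 1 ∧ x 5 4 = 1 ∧
    ∀ i j : Fin 6, x i j ≠ 0 →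
      ((i : ℕ) < 3 ∧ (j : ℕ) < 3) ∨ (i = 3 ∧ j = 3) ∨ (i = 4 ∧ j = 5) ∨ (i = 5 ∧ j = 4)}

/-- The `2 × 2` block of a `6 × 6` matrix at block position `(k, l)`. -/
def blk {𝕂 : Type*} [RCLike 𝕂] (k l : Fin 3) (s : Matrix (Fin 6) (Fin 6) 𝕂) :
    Matrix (Fin 2) (Fin 2) 𝕂 :=
  Matrix.of fun i j =>
    s ⟨2 * (k : ℕ) + (i : ℕ), by have := k.2; have := i.2; omega⟩
      ⟨2 * (l : ℕ) + (j : ℕ), by have := l.2; have := j.2; omega⟩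

open Classical in
/-- The character `χ_{S₄,₂}` of `S₄,₂`, built from a character `χ` of `𝕂ˣ` and an
additive character `ψ` of `𝕂`:  on `s = [[a,b,0],[0,a,0],[0,0,a]]` its value is
`χ(det a)·ψ(tr(b·a⁻¹))`. -/
noncomputable def chiS42 {𝕂 : Type*} [RCLike 𝕂] (χ : 𝕂ˣ →* ℂˣ) (ψ : 𝕂 → ℂ)
    (s : Matrix (Fin 6) (Fin 6) 𝕂) : ℂ :=
  if h : IsUnit (blk 0 0 s).det then
    (χ h.unit : ℂ) * ψ (Matrix.trace (blk 0 1 s * (blk 0 0 s)⁻¹))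
  else 0

@[simp]
lemma cons_val_five' {α : Type*} {m : ℕ} (x : α) (u : Fin m.succ.succ.succ.succ.succ → α) :
    Matrix.vecCons x u 5 = Matrix.vecHead (Matrix.vecTail (Matrix.vecTail (Matrix.vecTail (Matrix.vecTail u)))) :=
  rfl

section Aux
variable {𝕂 : Type*} [RCLike 𝕂]

private def G1mat (p q : 𝕂) : Matrix (Fin 6) (Fin 6) 𝕂 :=
  !![1,0,p,0,0,0; 0,1,q,0,0,0; 0,0,1,0,0,0; 0,0,0,1,0,0; 0,0,0,0,1,0; 0,0,0,0,0,1]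

private lemma G1mat_asm (p q : 𝕂) :
    G1mat p q = asm !![(1 : Matrix (Fin 2) (Fin 2) 𝕂), !![p,0;q,0], 0; 0, 1, 0; 0, 0, 1] := by
  ext i j; fin_cases i <;> fin_cases j <;> rfl

private lemma G1mat_blk00 (p q : 𝕂) : blk 0 0 (G1mat p q) = 1 := by
  ext i j; fin_cases i <;> fin_cases j <;> rfl

private lemma G1mat_blk01 (p q : 𝕂) : blk 0 1 (G1mat p q) = !![p,0;q,0] := by
  ext i j; fin_cases i <;> fin_cases j <;> rfl

private lemma G1mat_mem (p q : 𝕂) : G1mat p q ∈ S42 𝕂 :=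
  ⟨1, !![p,0;q,0], by simp, G1mat_asm p q⟩

set_option maxHeartbeats 1000000 in
private lemma G1mat_nilp (p q : 𝕂) : IsNilpotent (G1mat p q - 1) := by
  refine ⟨2, ?_⟩
  have h : G1mat p q - 1 =
      !![0,0,p,0,0,0; 0,0,q,0,0,0; 0,0,0,0,0,0; 0,0,0,0,0,0; 0,0,0,0,0,0; 0,0,0,0,0,0] := by
    ext i j; fin_cases i <;> fin_cases j <;>
      simp [G1mat, Matrix.sub_apply, Matrix.one_apply, Matrix.vecHead, Matrix.vecTail]
  rw [h, pow_two]
  ext i j; fin_cases i <;> fin_cases j <;>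
    simp [Matrix.mul_apply, Fin.sum_univ_six, Matrix.vecHead, Matrix.vecTail, Matrix.cons_val_zero, Matrix.cons_val_one]

private lemma G1mat_chi (χ : 𝕂ˣ →* ℂˣ) (ψ : 𝕂 → ℂ) (p q : 𝕂) :
    chiS42 χ ψ (G1mat p q) = ψ p := by
  rw [chiS42, G1mat_blk00, G1mat_blk01]
  rw [dif_pos (by simp)]
  have hu : ∀ h : IsUnit (1 : Matrix (Fin 2) (Fin 2) 𝕂).det, h.unit = 1 := by
    intro h; ext; simp
  simp [hu, Matrix.trace_fin_two]

end Aux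

set_option maxHeartbeats 1000000 in
/-- If `x ∈ 𝔷₄` has `(1,3)` entry different from its `(3,1)` entry (1-indexed), then
there are unipotent `g₁, g₂ ∈ S₄,₂` with `g₁·x·g₂^τ = x` and
`χ_{S₄,₂}(g₁)·χ_{S₄,₂}(g₂) ≠ 1`. -/
theorem z4_unipotent_incompatibility {𝕂 : Type*} [RCLike 𝕂]
    (ψ : 𝕂 → ℂ) (hψ_add : ∀ s t, ψ (s + t) = ψ s * ψ t) (hψ_unitary : ∀ t, ‖ψ t‖ = 1)
    (hψ_cont : Continuous ψ) (hψ_nontriv : ∃ t, ψ t ≠ 1)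
    (χ : 𝕂ˣ →* ℂˣ)
    (x : Matrix (Fin 6) (Fin 6) 𝕂) (hx : x ∈ z4set 𝕂) (hne : x 0 2 ≠ x 2 0) :
    ∃ g₁ ∈ S42 𝕂, ∃ g₂ ∈ S42 𝕂, IsNilpotent (g₁ - 1) ∧ IsNilpotent (g₂ - 1) ∧
      g₁ * x * g₂ᵀ = x ∧ chiS42 χ ψ g₁ * chiS42 χ ψ g₂ ≠ 1 := by
  obtain ⟨hdet, h22, h33, h45, h54, hz⟩ := hx
  obtain ⟨t₀, ht₀⟩ := hψ_nontriv
  set α := x 0 2 with hα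
  set β := x 1 2 with hβ
  set γ := x 2 0 with hγ
  set δ := x 2 1 with hδ
  have hd : α - γ ≠ 0 := sub_ne_zero.mpr hne
  set t : 𝕂 := t₀ / (α - γ) with ht
  have h23 : x 2 3 = 0 := by by_contra h; exact absurd (hz 2 3 h) (by decide)
  have h24 : x 2 4 = 0 := by by_contra h; exact absurd (hz 2 4 h) (by decide)
  have h25 : x 2 5 = 0 := by by_contra h; exact absurd (hz 2 5 h) (by decide)
  have h32 : x 3 2 = 0 := by by_contra h; exact absurd (hz 3 2 h) (by decide)
  have h42 : x 4 2 = 0 := by by_contra h; exact absurd (hz 4 2 h) (by decide)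
  have h52 : x 5 2 = 0 := by by_contra h; exact absurd (hz 5 2 h) (by decide)
  refine ⟨G1mat (t * α) (t * β), G1mat_mem _ _, G1mat (-(t * γ)) (-(t * δ)), G1mat_mem _ _,
    G1mat_nilp _ _, G1mat_nilp _ _, ?_, ?_⟩
  · ext i j
    fin_cases i <;> fin_cases j <;>
      (simp only [Matrix.mul_apply, Matrix.transpose_apply, Fin.sum_univ_six]
       simp [G1mat, Matrix.vecHead, Matrix.vecTail,
         h22, h23, h24, h25, h32, h42, h52, ← hα, ← hβ, ← hγ, ← hδ]
       try ring)
  · rw [G1mat_chi, G1mat_chi, ← hψ_add]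
    have : t * α + -(t * γ) = t₀ := by
      rw [ht]; field_simp; ring
    rw [this]; exact ht₀
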